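/- For any CW pair (X,A), one has cat(X,A) ≤ cat(X − A) + 1. -/

import Mathlib

open Set unitInterval

section Defs

variable {X : Type*} {Y : Type*} [TopologicalSpace X] [TopologicalSpace Y]

/-- The restriction of `f` to `V` is null-homotopic. -/
def NullhomotopicOn (f : X → Y) (V : Set X) : Prop :=
  ∃ (H : C(unitInterval × ↥V, Y)) (y : Y),
    (∀ x : ↥V, H (1, x) = f x) ∧ (∀ x : ↥V, H (0, x) = y)

/-- The restriction of `f` to `V` is homotopic to a map with values in `A`. -/
def DeformsIntoOn (f : X → Y) (V : Set X) (A : Set Y) : Prop :=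
  ∃ H : C(unitInterval × ↥V, Y),
    (∀ x : ↥V, H (1, x) = f x) ∧ (∀ x : ↥V, H (0, x) ∈ A)

/-- There is a homotopy of pairs `(V × I, (V ∩ A) × I) → (Y, B)` ending at `f|_V`
and starting at a map into `B`. -/
def RelPairDeform (f : X → Y) (V A : Set X) (B : Set Y) : Prop :=
  ∃ H : C(unitInterval × ↥V, Y),
    (∀ x : ↥V, H (1, x) = f x) ∧ (∀ x : ↥V, H (0, x) ∈ B) ∧
    (∀ (t : unitInterval) (x : ↥V), (x : X) ∈ A → H (t, x) ∈ B)

/-- `relcat f A B ≤ n` : covering by `n+1` open sets as in the definition of the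
relative category of a map of pairs `f : (X,A) → (Y,B)`. -/
def relcatLE (f : X → Y) (A : Set X) (B : Set Y) (n : ℕ) : Prop :=
  ∃ V : Fin (n + 1) → Set X, (∀ i, IsOpen (V i)) ∧ (⋃ i, V i) = Set.univ ∧
    A ⊆ V 0 ∧ (∀ i, i ≠ 0 → NullhomotopicOn f (V i)) ∧ RelPairDeform f (V 0) A B

/-- The relative category of a map of pairs `f : (X,A) → (Y,B)` (`⊤` if none exists). -/
noncomputable def relcat (f : X → Y) (A : Set X) (B : Set Y) : ℕ∞ :=
  sInf {n : ℕ∞ | ∃ m : ℕ, n = (m : ℕ∞) ∧ relcatLE f A B m}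

/-- `qscat f A ≤ n` : covering by `n+1` open sets on each of which `f` deforms into `A`. -/
def qscatLE (f : X → Y) (A : Set Y) (n : ℕ) : Prop :=
  ∃ V : Fin (n + 1) → Set X, (∀ i, IsOpen (V i)) ∧ (⋃ i, V i) = Set.univ ∧
    ∀ i, DeformsIntoOn f (V i) A

/-- The quasi-strong LS category of a map of pairs `f : (B,C) → (X,A)`. -/
noncomputable def qscat (f : X → Y) (A : Set Y) : ℕ∞ :=
  sInf {n : ℕ∞ | ∃ m : ℕ, n = (m : ℕ∞) ∧ qscatLE f A m}

/-- The restriction of `f : (X,C) → (Y,A)` to `(V, V ∩ C)` is strongly relatively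
inessential. -/
def StronglyRelInessentialOn (f : X → Y) (V C : Set X) (A : Set Y) : Prop :=
  ∃ H : C(unitInterval × ↥V, Y),
    (∀ x : ↥V, H (1, x) = f x) ∧ (∀ x : ↥V, H (0, x) ∈ A) ∧
    (∀ (t : unitInterval) (x : ↥V), (x : X) ∈ C → H (t, x) = f x)

/-- `srelcat f C A ≤ n`. -/
def srelcatLE (f : X → Y) (C : Set X) (A : Set Y) (n : ℕ) : Prop :=
  ∃ V : Fin (n + 1) → Set X, (∀ i, IsOpen (V i)) ∧ (⋃ i, V i) = Set.univ ∧
    ∀ i, StronglyRelInessentialOn f (V i) C A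

/-- The strong relative LS category of a map of pairs `f : (B,C) → (X,A)`. -/
noncomputable def srelcat (f : X → Y) (C : Set X) (A : Set Y) : ℕ∞ :=
  sInf {n : ℕ∞ | ∃ m : ℕ, n = (m : ℕ∞) ∧ srelcatLE f C A m}

/-- `catMap f ≤ n` : covering by `n+1` open sets on each of which `f` is null-homotopic. -/
def catMapLE (f : X → Y) (n : ℕ) : Prop :=
  ∃ V : Fin (n + 1) → Set X, (∀ i, IsOpen (V i)) ∧ (⋃ i, V i) = Set.univ ∧
    ∀ i, NullhomotopicOn f (V i)

/-- The LS category of a map. -/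
noncomputable def catMap (f : X → Y) : ℕ∞ :=
  sInf {n : ℕ∞ | ∃ m : ℕ, n = (m : ℕ∞) ∧ catMapLE f m}

end Defs

section Aux

variable {X : Type*} [TopologicalSpace X] {A : Set X}

/-- Transfer a null-homotopy of the identity on an open set of the subspace `Aᶜ`
to the corresponding open set of `X`. -/
lemma nullhomotopicOn_image (hA : IsClosed A) {W : Set ↥(Aᶜ)}
    (hW : NullhomotopicOn (id : ↥(Aᶜ) → ↥(Aᶜ)) W) :
    NullhomotopicOn (id : X → X) (Subtype.val '' W) := by
  obtain ⟨H, y, h1, h0⟩ := hW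
  have hmem1 : ∀ x : ↥(Subtype.val '' W), (x : X) ∈ Aᶜ := by
    rintro ⟨x, a, ha, rfl⟩; exact a.2
  have hmem2 : ∀ x : ↥(Subtype.val '' W), (⟨(x : X), hmem1 x⟩ : ↥(Aᶜ)) ∈ W := by
    rintro ⟨x, a, ha, rfl⟩; simpa using ha
  set g : ↥(Subtype.val '' W) → ↥W := fun x => ⟨⟨(x : X), hmem1 x⟩, hmem2 x⟩ with hg
  have hgc : Continuous g := by
    exact (continuous_subtype_val.subtype_mk hmem1).subtype_mk hmem2
  refine ⟨⟨fun p => ((H (p.1, g p.2)) : X), ?_⟩, (y : X), ?_, ?_⟩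
  · exact continuous_subtype_val.comp
      (H.continuous.comp (continuous_fst.prodMk (hgc.comp continuous_snd)))
  · intro x
    simp only [ContinuousMap.coe_mk]
    rw [h1 (g x)]; rfl
  · intro x
    simp only [ContinuousMap.coe_mk]
    rw [h0 (g x)]

lemma relcatLE_of_catMapLE (hAcl : IsClosed A)
    (hNDR : ∃ V : Set X, IsOpen V ∧ A ⊆ V ∧
      ∃ H : C(unitInterval × ↥V, X),
        (∀ x : ↥V, H (1, x) = (x : X)) ∧ (∀ x : ↥V, H (0, x) ∈ A) ∧
        (∀ (t : unitInterval) (x : ↥V), (x : X) ∈ A → H (t, x) = (x : X)))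
    {m : ℕ} (hm : catMapLE (id : ↥(Aᶜ) → ↥(Aᶜ)) m) :
    relcatLE (id : X → X) A A (m + 1) := by
  obtain ⟨V, hVopen, hAV, H, hH1, hH0, hHA⟩ := hNDR
  obtain ⟨W, hWopen, hWcover, hWnull⟩ := hm
  have hAopen : IsOpen (Aᶜ) := hAcl.isOpen_compl
  refine ⟨Fin.cases V (fun i => Subtype.val '' W i), ?_, ?_, ?_, ?_, ?_⟩
  · intro i
    refine Fin.cases ?_ ?_ i
    · exact hVopen
    · intro j
      exact hAopen.isOpenMap_subtype_val _ (hWopen j)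
  · apply Set.eq_univ_of_forall
    intro x
    by_cases hx : x ∈ A
    · exact Set.mem_iUnion.2 ⟨0, hAV hx⟩
    · have : (⟨x, hx⟩ : ↥(Aᶜ)) ∈ ⋃ i, W i := hWcover ▸ Set.mem_univ _
      obtain ⟨i, hi⟩ := Set.mem_iUnion.1 this
      refine Set.mem_iUnion.2 ⟨i.succ, ?_⟩
      simp only [Fin.cases_succ]
      exact ⟨(⟨x, hx⟩ : ↥(Aᶜ)), hi, rfl⟩
  · intro a ha; exact hAV ha
  · intro i hi
    rcases Fin.eq_zero_or_eq_succ i with rfl | ⟨j, rfl⟩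
    · exact absurd rfl hi
    · simpa using nullhomotopicOn_image hAcl (hWnull j)
  · exact ⟨H, hH1, hH0, fun t x hx => (hHA t x hx) ▸ hx⟩

end Aux

/-- The `n`-th (higher) topological complexity of a map `f : X → Y`:
`qscat` of the induced map of pairs `(Xⁿ, Δₙ(X)) → (Yⁿ, Δₙ(Y))`. -/
noncomputable def TCmap (n : ℕ) {X Y : Type*} [TopologicalSpace X] [TopologicalSpace Y]
    (f : X → Y) : ℕ∞ :=
  qscat (fun x : Fin n → X => fun i => f (x i)) {y : Fin n → Y | ∀ i j, y i = y j}

/-- for a CW pair `(X,A)` (encoded by `A` being closed and having an open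
neighborhood which deformation retracts onto `A` rel `A`), one has
`cat(X,A) ≤ cat(X − A) + 1`, where `cat(X,A) = relcat(id : (X,A) → (X,A))` and
`cat(X − A)` is the ordinary LS category of the subspace `X − A`. -/
theorem cat_pair_le_cat_compl_add_one {X : Type*} [TopologicalSpace X] {A : Set X}
    (hAcl : IsClosed A)
    (hNDR : ∃ V : Set X, IsOpen V ∧ A ⊆ V ∧
      ∃ H : C(unitInterval × ↥V, X),
        (∀ x : ↥V, H (1, x) = (x : X)) ∧ (∀ x : ↥V, H (0, x) ∈ A) ∧
        (∀ (t : unitInterval) (x : ↥V), (x : X) ∈ A → H (t, x) = (x : X))) :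
    relcat (id : X → X) A A ≤ catMap (id : ↥(Aᶜ) → ↥(Aᶜ)) + 1 := by
  by_cases hS : ∃ m : ℕ, catMapLE (id : ↥(Aᶜ) → ↥(Aᶜ)) m
  · classical
    set m₀ := Nat.find hS with hm₀
    have hcat : ((m₀ : ℕ∞)) ≤ catMap (id : ↥(Aᶜ) → ↥(Aᶜ)) := by
      apply le_sInf
      rintro n ⟨m, rfl, hmle⟩
      exact_mod_cast Nat.find_min' hS hmle
    have hrel : relcat (id : X → X) A A ≤ ((m₀ + 1 : ℕ) : ℕ∞) :=
      sInf_le ⟨m₀ + 1, rfl, relcatLE_of_catMapLE hAcl hNDR (Nat.find_spec hS)⟩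
    calc relcat (id : X → X) A A ≤ ((m₀ + 1 : ℕ) : ℕ∞) := hrel
      _ = (m₀ : ℕ∞) + 1 := by push_cast; ring
      _ ≤ catMap (id : ↥(Aᶜ) → ↥(Aᶜ)) + 1 := add_le_add_left hcat 1
  · have : catMap (id : ↥(Aᶜ) → ↥(Aᶜ)) = ⊤ := by
      rw [catMap, sInf_eq_top]
      rintro n ⟨m, rfl, hmle⟩
      exact absurd ⟨m, hmle⟩ hS
    rw [this]
    exact le_top
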